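/- Let q be an odd prime and d a positive integer with -d ≡ 0, 1 (mod 4) and with -d a quadratic nonresidue modulo q (in particular q ∤ d). Let β ∈ ℤ. Then the three integers q², q(d - 2β), and β² - dβ + d(d+1)/4 have greatest common divisor 1. -/

import Mathlib

theorem stmt_18 (q : ℕ) (hq : q.Prime) (hodd : Odd q) (d : ℕ) (hd : 0 < d)
    (hd4 : (-(d : ℤ)) % 4 = 0 ∨ (-(d : ℤ)) % 4 = 1)
    (hnr : ∀ x : ℤ, ¬ (q : ℤ) ∣ x ^ 2 + (d : ℤ)) (β : ℤ) :
    Int.gcd ((q : ℤ) ^ 2)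
      (Int.gcd ((q : ℤ) * ((d : ℤ) - 2 * β))
        (β ^ 2 - (d : ℤ) * β + (d : ℤ) * (d + 1) / 4)) = 1 := by
  set c : ℤ := β ^ 2 - (d : ℤ) * β + (d : ℤ) * (d + 1) / 4 with hc
  -- 4 ∣ d*(d+1)
  have h4 : (4 : ℤ) ∣ (d : ℤ) * (d + 1) := by
    rcases hd4 with h | h
    · have : (d : ℤ) % 4 = 0 := by omega
      exact Dvd.dvd.mul_right (Int.dvd_of_emod_eq_zero this) _
    · have : ((d : ℤ) + 1) % 4 = 0 := by omega
      exact Dvd.dvd.mul_left (Int.dvd_of_emod_eq_zero this) _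
    -- 4 * c = (2β - d)^2 + d
  have key : 4 * c = (2 * β - (d : ℤ)) ^ 2 + (d : ℤ) := by
    obtain ⟨k, hk⟩ := h4
    have hdiv : (d : ℤ) * (d + 1) / 4 = k := by rw [hk]; exact Int.mul_ediv_cancel_left _ (by norm_num)
    rw [hc, hdiv]; nlinarith [hk]
  have hqc : ¬ (q : ℤ) ∣ c := by
    intro h
    exact hnr (2 * β - (d : ℤ)) (key ▸ Dvd.dvd.mul_left h 4)
  set X : ℕ := Int.gcd ((q : ℤ) * ((d : ℤ) - 2 * β)) c with hX
  have hqX : ¬ q ∣ X := by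
    intro h
    exact hqc (dvd_trans (Int.natCast_dvd_natCast.mpr h) (Int.gcd_dvd_right _ _))
  have : Int.gcd ((q : ℤ) ^ 2) (X : ℤ) = Nat.gcd (q ^ 2) X := by
    rw [Int.gcd]
    simp [Int.natAbs_pow]
  rw [this]
  exact Nat.Coprime.pow_left _ (hq.coprime_iff_not_dvd.mpr hqX)
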